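/- Let X be an n×n matrix with n ≥ 5 satisfying condition (0). Then for any two columns X^{(i)}, X^{(j)}, the difference X^{(i)} − X^{(j)} has at most three nonzero coordinates. -/

import Mathlib

open Matrix

/-- `P` is a permutation matrix. -/
def IsPermMatrix {n : ℕ} (P : Matrix (Fin n) (Fin n) ℝ) : Prop :=
  ∃ σ : Equiv.Perm (Fin n), P = σ.permMatrix ℝ

/-- Vector majorization: `a = D b` for some doubly stochastic `D`. -/
def VecMaj {n : ℕ} (a b : Fin n → ℝ) : Prop :=
  ∃ D ∈ doublyStochastic ℝ (Fin n), a = D.mulVec b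

/-- Strong majorization of matrices: `A = D B` for some doubly stochastic `D`. -/
def StrongMaj {n m : ℕ} (A B : Matrix (Fin n) (Fin m) ℝ) : Prop :=
  ∃ D ∈ doublyStochastic ℝ (Fin n), A = D * B

/-- `a` is a permutation of `b`. -/
def PermOf {n : ℕ} (a b : Fin n → ℝ) : Prop :=
  ∃ σ : Equiv.Perm (Fin n), ∀ i, a i = b (σ i)

def Cond0 {n : ℕ} (X : Matrix (Fin n) (Fin n) ℝ) : Prop :=
  ∀ a : Fin n → ℝ, ∑ i, a i = 0 →
    ∀ P : Matrix (Fin n) (Fin n) ℝ, IsPermMatrix P →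
      PermOf (X.mulVec a) (X.mulVec (P.mulVec a))

lemma permMatrix_mulVec {n : ℕ} (σ : Equiv.Perm (Fin n)) (a : Fin n → ℝ) :
    (σ.permMatrix ℝ).mulVec a = fun k => a (σ k) := by
  funext k
  simp [Matrix.mulVec, dotProduct, PEquiv.toMatrix_apply, Equiv.toPEquiv_apply]
lemma mulVec_single_sub {n : ℕ} (X : Matrix (Fin n) (Fin n) ℝ) (t m₀ : Fin n) :
    X.mulVec (fun l => (if l = m₀ then (1:ℝ) else 0) - 1/n) t
      = X t m₀ - (∑ l, X t l)/n := by
  simp [Matrix.mulVec, dotProduct, mul_sub, Finset.sum_sub_distrib,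
    mul_ite, Finset.sum_ite_eq', Finset.sum_div, mul_one_div, div_eq_mul_inv, Finset.sum_mul]
lemma uniform_perm {n : ℕ} {X : Matrix (Fin n) (Fin n) ℝ} (hX : Cond0 X)
    (σ : Equiv.Perm (Fin n)) :
    ∃ τ : Equiv.Perm (Fin n), ∀ a : Fin n → ℝ, ∑ i, a i = 0 →
      ∀ t, X.mulVec a t = X.mulVec (fun m => a (σ m)) (τ t) := by
  classical
  set L : (Fin n → ℝ) →ₗ[ℝ] ℝ := ∑ i, LinearMap.proj i with hL
  set H : Submodule ℝ (Fin n → ℝ) := LinearMap.ker L with hH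
  have hmemH : ∀ a : Fin n → ℝ, a ∈ H ↔ ∑ i, a i = 0 := by
    intro a
    simp [hH, hL, LinearMap.mem_ker, LinearMap.sum_apply]
  let F₂ : Equiv.Perm (Fin n) → ((Fin n → ℝ) →ₗ[ℝ] (Fin n → ℝ)) := fun τ =>
    (LinearMap.funLeft ℝ ℝ τ).comp (X.mulVecLin.comp (LinearMap.funLeft ℝ ℝ σ))
  let U : Equiv.Perm (Fin n) → Submodule ℝ (Fin n → ℝ) := fun τ =>
    LinearMap.eqLocus X.mulVecLin (F₂ τ)
  have hmemU : ∀ (τ : Equiv.Perm (Fin n)) (a : Fin n → ℝ),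
      a ∈ U τ ↔ ∀ t, X.mulVec a t = X.mulVec (fun m => a (σ m)) (τ t) := by
    intro τ a
    constructor
    · intro h t
      have := congrFun h t
      simpa [U, F₂, LinearMap.funLeft, Function.comp_def] using this
    · intro h
      funext t
      simpa [U, F₂, LinearMap.funLeft, Function.comp_def] using h t
  have hcov : ⋃ τ : Equiv.Perm (Fin n), (((U τ).comap H.subtype : Submodule ℝ H) : Set H)
      = Set.univ := by
    apply Set.eq_univ_of_forall
    rintro ⟨a, ha⟩
    have ha' : ∑ i, a i = 0 := (hmemH a).1 ha
    obtain ⟨π, hπ⟩ := hX a ha' (σ.permMatrix ℝ) ⟨σ, rfl⟩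
    refine Set.mem_iUnion.2 ⟨π, ?_⟩
    have : a ∈ U π := by
      rw [hmemU]
      intro t
      have := hπ t
      rwa [_root_.permMatrix_mulVec] at this
    simpa [Submodule.mem_comap] using this
  obtain ⟨τ, hτ⟩ := Subspace.exists_eq_top_of_iUnion_eq_univ hcov
  refine ⟨τ, fun a ha t => ?_⟩
  have haH : a ∈ H := (hmemH a).2 ha
  have : (⟨a, haH⟩ : H) ∈ ((U τ).comap H.subtype : Submodule ℝ H) := by
    rw [hτ]; trivial
  rw [Submodule.mem_comap] at this
  exact (hmemU τ a).1 this t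
noncomputable def Rw {n : ℕ} (X : Matrix (Fin n) (Fin n) ℝ) (t m : Fin n) : ℝ :=
  X t m - (∑ l, X t l) / n
lemma row_struct {n : ℕ} (hn : 5 ≤ n) {X : Matrix (Fin n) (Fin n) ℝ} (hX : Cond0 X)
    (σ : Equiv.Perm (Fin n)) :
    ∃ τ : Equiv.Perm (Fin n), ∀ t m, Rw X (τ t) m = Rw X t (σ m) := by
  obtain ⟨τ, hτ⟩ := uniform_perm hX σ
  refine ⟨τ, fun t m => ?_⟩
  have hnR : (n : ℝ) ≠ 0 := by positivity
  set a : Fin n → ℝ := fun l => (if l = σ m then (1:ℝ) else 0) - 1/n with ha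
  have hsum : ∑ i, a i = 0 := by
    simp [ha, Finset.sum_sub_distrib, Finset.sum_ite_eq', Finset.card_univ]
    field_simp
    norm_num
  have h1 : X.mulVec a t = Rw X t (σ m) := mulVec_single_sub X t (σ m)
  have h2 : X.mulVec (fun l => a (σ l)) (τ t) = Rw X (τ t) m := by
    have : (fun l => a (σ l)) = fun l => (if l = m then (1:ℝ) else 0) - 1/n := by
      funext l
      simp only [ha]
      congr 1
      by_cases h : l = m
      · simp [h]
      · simp [h, fun hc => h (σ.injective hc)]
    rw [this]
    exact mulVec_single_sub X (τ t) m
  rw [← h1, ← h2, hτ a hsum t]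
lemma exists_perm_map {n : ℕ} (S A : Finset (Fin n)) (h : S.card = A.card) :
    ∃ σ : Equiv.Perm (Fin n), ∀ p, σ p ∈ A ↔ p ∈ S := by
  classical
  have h1 : Fintype.card {x // x ∈ S} = Fintype.card {x // x ∈ A} := by
    simpa [Fintype.card_coe] using h
  have h2 : Fintype.card {x // ¬ x ∈ S} = Fintype.card {x // ¬ x ∈ A} := by
    rw [Fintype.card_subtype_compl, Fintype.card_subtype_compl, h1]
  let e : {x // x ∈ S} ≃ {x // x ∈ A} := Fintype.equivOfCardEq h1
  let f : {x // ¬ x ∈ S} ≃ {x // ¬ x ∈ A} := Fintype.equivOfCardEq h2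
  refine ⟨Equiv.subtypeCongr e f, fun p => ?_⟩
  by_cases hp : p ∈ S
  · simp only [Equiv.subtypeCongr, Equiv.trans_apply,
      Equiv.sumCompl_symm_apply_of_pos hp, Equiv.sumCongr_apply, Sum.map_inl,
      Equiv.sumCompl_apply_inl]
    exact ⟨fun _ => hp, fun _ => (e ⟨p, hp⟩).2⟩
  · simp only [Equiv.subtypeCongr, Equiv.trans_apply,
      Equiv.sumCompl_symm_apply_of_neg hp, Equiv.sumCongr_apply, Sum.map_inr,
      Equiv.sumCompl_apply_inr]
    exact ⟨fun hc => absurd hc (f ⟨p, hp⟩).2, fun hc => absurd hc hp⟩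
lemma const_or_spike {n : ℕ} (hn : 5 ≤ n) {r : Fin n → Fin n → ℝ}
    (hstruct : ∀ σ : Equiv.Perm (Fin n), ∃ τ : Equiv.Perm (Fin n),
      ∀ t m, r (τ t) m = r t (σ m))
    (t₀ : Fin n) (hnc : ¬ ∀ m m', r t₀ m = r t₀ m') :
    ∃ p, ∀ m m', m ≠ p → m' ≠ p → r t₀ m = r t₀ m' := by
  classical
  by_contra hns
  push_neg at hns
  set w := r t₀ with hw
  by_cases hA : ∃ m₀ : Fin n, 2 ≤ (Finset.univ.filter fun m => w m = w m₀).card ∧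
      (Finset.univ.filter fun m => w m = w m₀).card ≤ n - 2
  · obtain ⟨m₀, hm2, hm2'⟩ := hA
    set y := w m₀ with hy
    set A := Finset.univ.filter (fun m => w m = y) with hAdef
    have hmemA : ∀ q, q ∈ A ↔ w q = y := by
      intro q; simp [hAdef]
    set F : Finset (Finset (Fin n)) :=
      (A ×ˢ Aᶜ).image (fun jx => insert jx.2 (A.erase jx.1)) with hF
    have hinj1 : Set.InjOn (fun jx : Fin n × Fin n => insert jx.2 (A.erase jx.1))
        ↑(A ×ˢ Aᶜ) := by
      rintro ⟨j, x⟩ hjx ⟨j', x'⟩ hjx' heq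
      simp only [Finset.mem_coe, Finset.mem_product, Finset.mem_compl] at hjx hjx'
      obtain ⟨hj, hx⟩ := hjx
      obtain ⟨hj', hx'⟩ := hjx'
      simp only at heq
      have hxx : x = x' := by
        have hxmem : x ∈ insert x' (A.erase j') := by rw [← heq]; exact Finset.mem_insert_self _ _
        rcases Finset.mem_insert.1 hxmem with h | h
        · exact h
        · exact absurd (Finset.mem_of_mem_erase h) hx
      subst hxx
      have hxe : x ∉ A.erase j := fun h => hx (Finset.mem_of_mem_erase h)
      have hxe' : x ∉ A.erase j' := fun h => hx (Finset.mem_of_mem_erase h)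
      have herase : A.erase j = A.erase j' := by
        have := congrArg (fun s => Finset.erase s x) heq
        simpa [Finset.erase_insert hxe, Finset.erase_insert hxe'] using this
      have hjj : j = j' := by
        by_contra hne
        have : j ∈ A.erase j' := Finset.mem_erase.2 ⟨hne, hj⟩
        rw [← herase] at this
        exact (Finset.notMem_erase j A) this
      simp [hjj]
    have hcardF : F.card = A.card * (n - A.card) := by
      rw [hF, Finset.card_image_of_injOn hinj1, Finset.card_product, Finset.card_compl,
        Fintype.card_fin]
    have hScard : ∀ S ∈ F, S.card = A.card := by
      intro S hS
      rw [hF] at hS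
      obtain ⟨⟨j, x⟩, hjx, rfl⟩ := Finset.mem_image.1 hS
      simp only [Finset.mem_product, Finset.mem_compl] at hjx
      obtain ⟨hj, hx⟩ := hjx
      have hxe : x ∉ A.erase j := fun h => hx (Finset.mem_of_mem_erase h)
      rw [Finset.card_insert_of_notMem hxe, Finset.card_erase_of_mem hj]
      have : 1 ≤ A.card := le_trans (by norm_num) hm2
      omega
    -- the injection into rows
    set g : Finset (Fin n) → Fin n := fun S =>
      if h : S.card = A.card then (hstruct (exists_perm_map S A h).choose).choose t₀ else t₀
      with hg
    have hgprop : ∀ S, S.card = A.card → S = Finset.univ.filter (fun p => r (g S) p = y) := by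
      intro S h
      have hσ := (exists_perm_map S A h).choose_spec
      have hτ := (hstruct (exists_perm_map S A h).choose).choose_spec
      ext p
      have hgS : g S = (hstruct (exists_perm_map S A h).choose).choose t₀ := by
        rw [hg]; simp [h]
      have : r (g S) p = w ((exists_perm_map S A h).choose p) := by
        rw [hgS, hτ t₀ p]
      simp only [Finset.mem_filter, Finset.mem_univ, true_and, this]
      rw [← hmemA, hσ p]
    have hginj : Set.InjOn g F := by
      intro S hS S' hS' heq
      rw [hgprop S (hScard S hS), hgprop S' (hScard S' hS'), heq]
    have hle : F.card ≤ n := by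
      have := Finset.card_le_card_of_injOn g (fun _ _ => Finset.mem_univ _) hginj
      simpa using this
    -- arithmetic contradiction
    have hmn : A.card ≤ n := by
      have := Finset.card_le_univ A
      simpa using this
    obtain ⟨a, ha⟩ : ∃ a, A.card = a + 2 := ⟨A.card - 2, by omega⟩
    obtain ⟨b, hb⟩ : ∃ b, n - A.card = b + 2 := ⟨n - A.card - 2, by omega⟩
    have hprod : A.card * (n - A.card) = a * b + 2 * a + 2 * b + 4 := by
      rw [hb, ha]; ring
    have hnab : n = a + b + 4 := by omega
    rw [hcardF, hprod] at hle
    have : 0 ≤ a * b := Nat.zero_le _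
    omega
  · -- all value classes have size 1, so w injective
    push_neg at hA
    have hwinj : Function.Injective w := by
      intro m m' heq
      by_contra hne
      set C := Finset.univ.filter (fun m'' => w m'' = w m) with hC
      have hmemC : ∀ q, q ∈ C ↔ w q = w m := by intro q; simp [hC]
      have h2 : 2 ≤ C.card := by
        rw [Nat.succ_le_iff]
        exact Finset.one_lt_card.2 ⟨m, (hmemC m).2 rfl, m', (hmemC m').2 heq.symm,
          fun h => hne h⟩
      have h3 : n - 2 < C.card := hA m h2
      have h4 : C.card ≤ n := by simpa using Finset.card_le_univ C
      rcases eq_or_lt_of_le h4 with hcn | hcn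
      · -- C = univ, w constant
        have hCuniv : C = Finset.univ := Finset.eq_univ_of_card C (by simpa using hcn)
        apply hnc
        intro m₁ m₂
        have h₁ : w m₁ = w m := (hmemC m₁).1 (hCuniv ▸ Finset.mem_univ m₁)
        have h₂ : w m₂ = w m := (hmemC m₂).1 (hCuniv ▸ Finset.mem_univ m₂)
        rw [h₁, h₂]
      · -- C.card = n - 1, complement a single point
        have hc1 : Cᶜ.card = 1 := by
          rw [Finset.card_compl, Fintype.card_fin]
          omega
        obtain ⟨p, hp⟩ := Finset.card_eq_one.1 hc1
        obtain ⟨m₁, m₂, hm₁, hm₂, hne'⟩ := hns p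
        have hm₁C : m₁ ∈ C := by
          by_contra h
          have : m₁ ∈ Cᶜ := Finset.mem_compl.2 h
          rw [hp] at this
          exact hm₁ (Finset.mem_singleton.1 this)
        have hm₂C : m₂ ∈ C := by
          by_contra h
          have : m₂ ∈ Cᶜ := Finset.mem_compl.2 h
          rw [hp] at this
          exact hm₂ (Finset.mem_singleton.1 this)
        exact hne' (((hmemC m₁).1 hm₁C).trans (((hmemC m₂).1 hm₂C).symm))
    -- injection from permutations into rows
    set f : Equiv.Perm (Fin n) → Fin n := fun σ => (hstruct σ).choose t₀ with hf
    have hfinj : Function.Injective f := by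
      intro σ σ' heq
      have h1 := (hstruct σ).choose_spec
      have h2 := (hstruct σ').choose_spec
      apply Equiv.ext
      intro m
      apply hwinj
      have e1 : r (f σ) m = w (σ m) := h1 t₀ m
      have e2 : r (f σ') m = w (σ' m) := h2 t₀ m
      rw [← e1, ← e2, heq]
    have hcard := Fintype.card_le_of_injective f hfinj
    rw [Fintype.card_perm, Fintype.card_fin] at hcard
    exact absurd hcard (Nat.lt_factorial_self (by omega)).not_ge
def SpikeAt {n : ℕ} (r : Fin n → Fin n → ℝ) (k p : Fin n) : Prop :=
  (∀ m m', m ≠ p → m' ≠ p → r k m = r k m') ∧ ∃ m, r k m ≠ r k p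
lemma spike_disjoint {n : ℕ} (hn : 5 ≤ n) {r : Fin n → Fin n → ℝ} {t q q' : Fin n}
    (hq : q ≠ q') (hsq : SpikeAt r t q) (hsq' : SpikeAt r t q') : False := by
  have hz : ∃ z : Fin n, z ≠ q ∧ z ≠ q' := by
    by_contra hc
    push_neg at hc
    have hsub : (Finset.univ : Finset (Fin n)) ⊆ {q, q'} := by
      intro z _
      rcases eq_or_ne z q with rfl | h
      · exact Finset.mem_insert_self _ _
      · simp [hc z h]
    have := Finset.card_le_card hsub
    have h2 : ({q, q'} : Finset (Fin n)).card ≤ 2 :=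
      le_trans (Finset.card_insert_le _ _) (by simp)
    simp only [Finset.card_univ, Fintype.card_fin] at this
    omega
  obtain ⟨z, hz1, hz2⟩ := hz
  have hall : ∀ m, r t m = r t z := by
    intro m
    by_cases hm : m = q
    · subst hm
      exact hsq'.1 m z hq hz2
    · exact hsq.1 m z hm hz1
  obtain ⟨m₁, hm₁⟩ := hsq.2
  exact hm₁ ((hall m₁).trans (hall q).symm)
lemma spike_unique {n : ℕ} (hn : 5 ≤ n) {r : Fin n → Fin n → ℝ}
    (hstruct : ∀ σ : Equiv.Perm (Fin n), ∃ τ : Equiv.Perm (Fin n),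
      ∀ t m, r (τ t) m = r t (σ m))
    (p : Fin n) : ∀ k k', SpikeAt r k p → SpikeAt r k' p → k = k' := by
  classical
  intro k k' hk hk'
  by_contra hne
  set S : Fin n → Finset (Fin n) := fun q => Finset.univ.filter (fun t => SpikeAt r t q)
    with hS
  have htrans : ∀ q : Fin n, ∀ t, SpikeAt r t p →
      SpikeAt r ((hstruct (Equiv.swap p q)).choose t) q := by
    intro q t ht
    have hτ := (hstruct (Equiv.swap p q)).choose_spec
    constructor
    · intro m m' hm hm'
      have h1 : Equiv.swap p q m ≠ p := by
        intro hc
        apply hm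
        have := congrArg (Equiv.swap p q) hc
        rwa [Equiv.swap_apply_self, Equiv.swap_apply_left] at this
      have h2 : Equiv.swap p q m' ≠ p := by
        intro hc
        apply hm'
        have := congrArg (Equiv.swap p q) hc
        rwa [Equiv.swap_apply_self, Equiv.swap_apply_left] at this
      rw [hτ t m, hτ t m']
      exact ht.1 _ _ h1 h2
    · obtain ⟨m₁, hm₁⟩ := ht.2
      refine ⟨Equiv.swap p q m₁, ?_⟩
      rw [hτ t _, hτ t q, Equiv.swap_apply_self, Equiv.swap_apply_right]
      exact hm₁
  have hcard2 : ∀ q : Fin n, 2 ≤ (S q).card := by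
    intro q
    have hτ := (hstruct (Equiv.swap p q)).choose_spec
    rw [Nat.succ_le_iff]
    apply Finset.one_lt_card.2
    refine ⟨(hstruct (Equiv.swap p q)).choose k, ?_, (hstruct (Equiv.swap p q)).choose k', ?_, ?_⟩
    · simp only [hS, Finset.mem_filter, Finset.mem_univ, true_and]
      exact htrans q k hk
    · simp only [hS, Finset.mem_filter, Finset.mem_univ, true_and]
      exact htrans q k' hk'
    · intro hc
      exact hne ((hstruct (Equiv.swap p q)).choose.injective hc)
  have hdisj : ∀ q ∈ (Finset.univ : Finset (Fin n)), ∀ q' ∈ (Finset.univ : Finset (Fin n)),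
      q ≠ q' → Disjoint (S q) (S q') := by
    intro q _ q' _ hqq
    rw [Finset.disjoint_left]
    intro t ht ht'
    simp only [hS, Finset.mem_filter, Finset.mem_univ, true_and] at ht ht'
    exact spike_disjoint hn hqq ht ht'
  have hsum : ∑ q : Fin n, (S q).card = (Finset.univ.biUnion S).card :=
    (Finset.card_biUnion hdisj).symm
  have hle : (Finset.univ.biUnion S).card ≤ n := by
    simpa using Finset.card_le_univ (Finset.univ.biUnion S)
  have h2n : 2 * n ≤ ∑ q : Fin n, (S q).card := by
    calc 2 * n = ∑ _q : Fin n, 2 := by simp [Finset.sum_const, Fintype.card_fin, mul_comm]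
    _ ≤ ∑ q : Fin n, (S q).card := Finset.sum_le_sum (fun q _ => hcard2 q)
  omega

theorem stmt14 {n : ℕ} (hn : 5 ≤ n) (X : Matrix (Fin n) (Fin n) ℝ)
    (hX : Cond0 X) (i j : Fin n) :
    (Finset.univ.filter fun k => X k i - X k j ≠ 0).card ≤ 3 := by
  classical
  by_cases hij : i = j
  · subst hij
    simp
  set r : Fin n → Fin n → ℝ := fun t m => Rw X t m with hr
  have hstruct : ∀ σ : Equiv.Perm (Fin n), ∃ τ : Equiv.Perm (Fin n),
      ∀ t m, r (τ t) m = r t (σ m) := fun σ => row_struct hn hX σ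
  have hdiff : ∀ k, X k i - X k j = r k i - r k j := by
    intro k
    simp only [hr, Rw]
    ring
  set K := Finset.univ.filter (fun k => X k i - X k j ≠ 0) with hK
  have hKmem : ∀ k ∈ K, r k i ≠ r k j := by
    intro k hk h
    simp only [hK, Finset.mem_filter] at hk
    apply hk.2
    rw [hdiff k, h, sub_self]
  have hspike : ∀ k ∈ K, SpikeAt r k i ∨ SpikeAt r k j := by
    intro k hk
    have hne := hKmem k hk
    have hnc : ¬ ∀ m m', r k m = r k m' := fun h => hne (h i j)
    obtain ⟨p, hp⟩ := const_or_spike hn hstruct k hnc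
    have hpij : p = i ∨ p = j := by
      by_contra hc
      push_neg at hc
      exact hne (hp i j (fun h => hc.1 h.symm) (fun h => hc.2 h.symm))
    rcases hpij with rfl | rfl
    · exact Or.inl ⟨hp, ⟨j, fun h => hne h.symm⟩⟩
    · exact Or.inr ⟨hp, ⟨i, hne⟩⟩
  have hcard : K.card ≤ ({i, j} : Finset (Fin n)).card := by
    apply Finset.card_le_card_of_injOn (fun k => if SpikeAt r k i then i else j)
    · intro k _
      by_cases h : SpikeAt r k i
      · simp [h]
      · simp [h]
    · intro k hk k' hk' heq
      simp only at heq
      by_cases h1 : SpikeAt r k i <;> by_cases h2 : SpikeAt r k' i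
      · exact spike_unique hn hstruct i k k' h1 h2
      · rw [if_pos h1, if_neg h2] at heq
        exact absurd heq hij
      · rw [if_neg h1, if_pos h2] at heq
        exact absurd heq.symm hij
      · have hk1 : SpikeAt r k j := (hspike k hk).resolve_left h1
        have hk2 : SpikeAt r k' j := (hspike k' hk').resolve_left h2
        exact spike_unique hn hstruct j k k' hk1 hk2
  calc K.card ≤ ({i, j} : Finset (Fin n)).card := hcard
  _ ≤ 2 := le_trans (Finset.card_insert_le _ _) (by simp)
  _ ≤ 3 := by omega
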